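/- For every integer l ≥ 2 there exist real numbers ε = ε(l) > 0 (one may take ε = 1/(18l)) and s₀ = s₀(l) > 0 such that the following holds. Let G = K_{s,t} be a complete bipartite graph on parts X and Y with |X| = s, |Y| = t, where s > s₀ and s/log s < t ≤ s, whose edges are colored with colors from an arbitrary set. Then, with q = ⌈s^ε⌉, at least one of the following holds: (i) G contains a rainbow colored K_{4l,4l}; (ii) G contains an edge-colored copy of K_{q,2l} on parts Q and R with |Q| = q and |R| = 2l (where either Q ⊆ X and R ⊆ Y, or Q ⊆ Y and R ⊆ X) that is Q-canonical; (iii) G contains a monochromatic copy of K_{q,2l} on parts Q and R with |Q| = q and |R| = 2l (where either Q ⊆ X and R ⊆ Y, or Q ⊆ Y and R ⊆ X). -/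
import Mathlib

open Finset Filter Real

namespace BCR

variable {γ : Type}

/-- pigeonhole: a large set maps to either a big fiber or many distinct values. -/
lemma color_pigeon (T : Finset ℕ) (z : ℕ → γ) (q : ℕ)
    (hT : (q - 1) * (q - 1) + 1 ≤ T.card) :
    (∃ Q ⊆ T, Q.card = q ∧ ∀ a ∈ Q, ∀ a' ∈ Q, z a = z a') ∨
    (∃ Q ⊆ T, Q.card = q ∧ ∀ a ∈ Q, ∀ a' ∈ Q, a ≠ a' → z a ≠ z a') := by
  classical
  by_cases himg : q ≤ (T.image z).card
  · right
    obtain ⟨C, hCsub, hCcard⟩ := Finset.exists_subset_card_eq himg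
    have hex : ∀ c ∈ C, ∃ a, a ∈ T ∧ z a = c := by
      intro c hc
      have := hCsub hc
      simpa [Finset.mem_image] using this
    choose g hgT hgz using hex
    refine ⟨C.attach.image (fun c => g c.1 c.2), ?_, ?_, ?_⟩
    · intro a ha
      simp only [Finset.mem_image, Finset.mem_attach, true_and] at ha
      obtain ⟨c, rfl⟩ := ha
      exact hgT _ _
    · rw [Finset.card_image_of_injective, Finset.card_attach, hCcard]
      intro c c' hcc
      simp only at hcc
      have : z (g c.1 c.2) = z (g c'.1 c'.2) := by rw [hcc]
      rw [hgz, hgz] at this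
      exact Subtype.ext this
    · intro a ha a' ha' hne
      simp only [Finset.mem_image, Finset.mem_attach, true_and] at ha ha'
      obtain ⟨c, rfl⟩ := ha
      obtain ⟨c', rfl⟩ := ha'
      rw [hgz, hgz]
      intro h
      exact hne (by rw [Subtype.ext h])
  · left
    push_neg at himg
    -- some fiber has size ≥ q
    have hsum : ∑ c ∈ T.image z, (T.filter fun a => z a = c).card = T.card :=
      (Finset.card_eq_sum_card_fiberwise (fun a ha => Finset.mem_image_of_mem z ha)).symm
    have hfiber : ∃ c ∈ T.image z, q ≤ (T.filter fun a => z a = c).card := by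
      by_contra hcon
      push_neg at hcon
      have : ∑ c ∈ T.image z, (T.filter fun a => z a = c).card ≤
          ∑ _c ∈ T.image z, (q - 1) := by
        refine Finset.sum_le_sum ?_
        intro c hc
        have := hcon c hc
        omega
      rw [hsum, Finset.sum_const, smul_eq_mul] at this
      have hle : (T.image z).card * (q - 1) ≤ (q - 1) * (q - 1) := by
        have h1 : (T.image z).card ≤ q - 1 := by omega
        exact Nat.mul_le_mul_right _ h1
      omega
    obtain ⟨c, _, hc⟩ := hfiber
    obtain ⟨Q, hQsub, hQcard⟩ :=
      Finset.exists_subset_card_eq hc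
    refine ⟨Q, hQsub.trans (Finset.filter_subset _ _), hQcard, ?_⟩
    intro a ha a' ha'
    have h1 := (Finset.mem_filter.1 (hQsub ha)).2
    have h2 := (Finset.mem_filter.1 (hQsub ha')).2
    rw [h1, h2]


/-- double counting: many vertices with monochromatic `d`-stars give a common
`m`-set on which many vertices are monochromatic. -/
lemma star_count (B H : Finset ℕ) (S : ℕ → Finset ℕ) (d m N : ℕ)
    (hS : ∀ a ∈ H, S a ⊆ B ∧ (S a).card = d)
    (hcount : (N - 1) * (B.card.choose m) < H.card * d.choose m) :
    ∃ R ∈ B.powersetCard m, N ≤ (H.filter fun a => R ⊆ S a).card := by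
  classical
  have key : ∑ R ∈ B.powersetCard m, (N - 1) <
      ∑ R ∈ B.powersetCard m, (H.filter fun a => R ⊆ S a).card := by
    rw [Finset.sum_const, smul_eq_mul, Finset.card_powersetCard]
    have hswap : ∑ R ∈ B.powersetCard m, (H.filter fun a => R ⊆ S a).card
        = ∑ a ∈ H, ((B.powersetCard m).filter fun R => R ⊆ S a).card := by
      simp only [Finset.card_filter]
      exact Finset.sum_comm
    have heach : ∀ a ∈ H, ((B.powersetCard m).filter fun R => R ⊆ S a).card
        = d.choose m := by
      intro a ha
      have : ((B.powersetCard m).filter fun R => R ⊆ S a) = (S a).powersetCard m := by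
        ext R
        simp only [Finset.mem_filter, Finset.mem_powersetCard]
        constructor
        · rintro ⟨⟨_, hc⟩, hsub⟩; exact ⟨hsub, hc⟩
        · rintro ⟨hsub, hc⟩; exact ⟨⟨hsub.trans (hS a ha).1, hc⟩, hsub⟩
      rw [this, Finset.card_powersetCard, (hS a ha).2]
    rw [hswap, Finset.sum_congr rfl heach, Finset.sum_const, smul_eq_mul]
    calc (B.card.choose m) * (N - 1) = (N-1) * (B.card.choose m) := by ring
    _ < H.card * d.choose m := hcount
    _ = H.card • d.choose m := by rw [smul_eq_mul]
  obtain ⟨R, hR, hlt⟩ := Finset.exists_lt_of_sum_lt key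
  exact ⟨R, hR, by omega⟩

/-- Heavy case: many vertices of `H ⊆ A` carry monochromatic `d`-stars into `B`;
conclude a monochromatic or canonical `K_{q,m}` with `Q ⊆ A`, `R ⊆ B`. -/
lemma heavy_side (χ : Finset ℕ → γ) (A B H : Finset ℕ) (hHA : H ⊆ A)
    (d m q : ℕ) (hm0 : 0 < m)
    (hheavy : ∀ a ∈ H, ∃ S, S ⊆ B ∧ S.card = d ∧
      ∀ b ∈ S, ∀ b' ∈ S, χ ({a, b} : Finset ℕ) = χ ({a, b'} : Finset ℕ))
    (hcount : (q - 1) * (q - 1) * (B.card.choose m) < H.card * d.choose m) :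
    ∃ Q R : Finset ℕ, Q ⊆ A ∧ R ⊆ B ∧ Q.card = q ∧ R.card = m ∧
      (((∀ x ∈ Q, ∀ y ∈ R, ∀ y' ∈ R, χ ({x, y} : Finset ℕ) = χ ({x, y'} : Finset ℕ)) ∧
        (∀ x ∈ Q, ∀ x' ∈ Q, ∀ y ∈ R, ∀ y' ∈ R, x ≠ x' →
          χ ({x, y} : Finset ℕ) ≠ χ ({x', y'} : Finset ℕ))) ∨
       (∀ x ∈ Q, ∀ x' ∈ Q, ∀ y ∈ R, ∀ y' ∈ R,
          χ ({x, y} : Finset ℕ) = χ ({x', y'} : Finset ℕ))) := by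
  classical
  choose S hSB hSd hSc using hheavy
  set S' : ℕ → Finset ℕ := fun a => if h : a ∈ H then S a h else ∅ with hS'
  have hS'p : ∀ a ∈ H, S' a ⊆ B ∧ (S' a).card = d := by
    intro a ha; rw [hS']; simp only [dif_pos ha]; exact ⟨hSB a ha, hSd a ha⟩
  obtain ⟨R, hRmem, hRcnt⟩ := star_count B H S' d m ((q-1)*(q-1)+1) hS'p
    (by simpa using hcount)
  rw [Finset.mem_powersetCard] at hRmem
  obtain ⟨hRB, hRcard⟩ := hRmem
  have hRne : R.Nonempty := Finset.card_pos.mp (by omega)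
  obtain ⟨b₀, hb₀⟩ := hRne
  set T := H.filter fun a => R ⊆ S' a with hT
  -- every a in T is constant on R
  have hconst : ∀ a ∈ T, ∀ y ∈ R, ∀ y' ∈ R,
      χ ({a, y} : Finset ℕ) = χ ({a, y'} : Finset ℕ) := by
    intro a ha y hy y' hy'
    rw [hT, Finset.mem_filter] at ha
    obtain ⟨haH, hsub⟩ := ha
    have := hSc a haH
    have hS'a : S' a = S a haH := by rw [hS']; simp [haH]
    rw [hS'a] at hsub
    exact this y (hsub hy) y' (hsub hy')
  set z : ℕ → γ := fun a => χ ({a, b₀} : Finset ℕ) with hz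
  rcases color_pigeon T z q hRcnt with ⟨Q, hQT, hQc, hmono⟩ | ⟨Q, hQT, hQc, hcanon⟩
  · refine ⟨Q, R, (hQT.trans (Finset.filter_subset _ _)).trans hHA, hRB, hQc, hRcard,
      Or.inr ?_⟩
    intro x hx x' hx' y hy y' hy'
    calc χ ({x, y} : Finset ℕ) = χ ({x, b₀} : Finset ℕ) := hconst x (hQT hx) y hy b₀ hb₀
    _ = χ ({x', b₀} : Finset ℕ) := hmono x hx x' hx'
    _ = χ ({x', y'} : Finset ℕ) := (hconst x' (hQT hx') y' hy' b₀ hb₀).symm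
  · refine ⟨Q, R, (hQT.trans (Finset.filter_subset _ _)).trans hHA, hRB, hQc, hRcard,
      Or.inl ⟨?_, ?_⟩⟩
    · intro x hx y hy y' hy'
      exact hconst x (hQT hx) y hy y' hy'
    · intro x hx x' hx' y hy y' hy' hne heq
      apply hcanon x hx x' hx' hne
      calc z x = χ ({x, y} : Finset ℕ) := (hconst x (hQT hx) y hy b₀ hb₀).symm
      _ = χ ({x', y'} : Finset ℕ) := heq
      _ = z x' := hconst x' (hQT hx') y' hy' b₀ hb₀


open scoped Classical in
/-- Stage 1 greedy: choose `i` vertices of `X₀` such that few `y ∈ Y₀` see a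
repeated color on them. -/
lemma stage1 (χ : Finset ℕ → γ) (X Y₀ X₀ : Finset ℕ) (hX₀ : X₀ ⊆ X) (d₁ k : ℕ)
    (hlight : ∀ y ∈ Y₀, ∀ x ∈ X,
      (X.filter fun x' => χ ({x', y} : Finset ℕ) = χ ({x, y} : Finset ℕ)).card ≤ d₁)
    (hkP : k < X₀.card) :
    ∀ i, i ≤ k → ∃ Q ⊆ X₀, Q.card = i ∧
      (X₀.card - k) * (Y₀.filter fun y => ¬ (∀ a ∈ Q, ∀ b ∈ Q,
        χ ({a, y} : Finset ℕ) = χ ({b, y} : Finset ℕ) → a = b)).card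
        ≤ i * i * Y₀.card * d₁ := by
  classical
  intro i
  induction i with
  | zero =>
    intro _
    refine ⟨∅, Finset.empty_subset _, rfl, ?_⟩
    have : (Y₀.filter fun y => ¬ (∀ a ∈ (∅ : Finset ℕ), ∀ b ∈ (∅ : Finset ℕ),
        χ ({a, y} : Finset ℕ) = χ ({b, y} : Finset ℕ) → a = b)) = ∅ := by
      apply Finset.filter_false_of_mem
      intro y _
      simp
    rw [this]
    simp
  | succ i ih =>
    intro hik
    obtain ⟨Q, hQX₀, hQcard, hQbad⟩ := ih (by omega)
    have hpool : (X₀ \ Q).Nonempty := by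
      rw [← Finset.card_pos, Finset.card_sdiff_of_subset hQX₀, hQcard]
      omega
    obtain ⟨x', hx'mem, hx'min⟩ := Finset.exists_min_image (X₀ \ Q)
      (fun x' => ∑ x ∈ Q, (Y₀.filter fun y =>
        χ ({x', y} : Finset ℕ) = χ ({x, y} : Finset ℕ)).card) hpool
    set g : ℕ → ℕ := fun x' => ∑ x ∈ Q, (Y₀.filter fun y =>
        χ ({x', y} : Finset ℕ) = χ ({x, y} : Finset ℕ)).card with hg
    -- averaging bound: (X₀.card - i) * g x' ≤ i * (Y₀.card * d₁)
    have havg : (X₀.card - i) * g x' ≤ i * (Y₀.card * d₁) := by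
      have h1 : (X₀ \ Q).card * g x' ≤ ∑ u ∈ X₀ \ Q, g u := by
        calc (X₀ \ Q).card * g x' = ∑ _u ∈ X₀ \ Q, g x' := by
              rw [Finset.sum_const, smul_eq_mul]
        _ ≤ ∑ u ∈ X₀ \ Q, g u := Finset.sum_le_sum (fun u hu => hx'min u hu)
      have h2 : ∑ u ∈ X₀ \ Q, g u ≤ i * (Y₀.card * d₁) := by
        rw [hg]
        rw [Finset.sum_comm]
        calc ∑ x ∈ Q, ∑ u ∈ X₀ \ Q, (Y₀.filter fun y =>
              χ ({u, y} : Finset ℕ) = χ ({x, y} : Finset ℕ)).card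
            ≤ ∑ x ∈ Q, (Y₀.card * d₁) := by
              refine Finset.sum_le_sum ?_
              intro x hx
              calc ∑ u ∈ X₀ \ Q, (Y₀.filter fun y =>
                    χ ({u, y} : Finset ℕ) = χ ({x, y} : Finset ℕ)).card
                  ≤ ∑ u ∈ X, (Y₀.filter fun y =>
                    χ ({u, y} : Finset ℕ) = χ ({x, y} : Finset ℕ)).card := by
                    refine Finset.sum_le_sum_of_subset ?_
                    exact (Finset.sdiff_subset).trans hX₀
              _ = ∑ y ∈ Y₀, (X.filter fun u =>
                    χ ({u, y} : Finset ℕ) = χ ({x, y} : Finset ℕ)).card := by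
                    simp only [Finset.card_filter]
                    exact Finset.sum_comm
              _ ≤ ∑ _y ∈ Y₀, d₁ := Finset.sum_le_sum
                    (fun y hy => hlight y hy x (hX₀ (hQX₀ hx)))
              _ = Y₀.card * d₁ := by rw [Finset.sum_const, smul_eq_mul]
        _ = Q.card * (Y₀.card * d₁) := by rw [Finset.sum_const, smul_eq_mul]
        _ = i * (Y₀.card * d₁) := by rw [hQcard]
      calc (X₀.card - i) * g x' = (X₀ \ Q).card * g x' := by
            rw [Finset.card_sdiff_of_subset hQX₀, hQcard]
      _ ≤ ∑ u ∈ X₀ \ Q, g u := h1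
      _ ≤ i * (Y₀.card * d₁) := h2
    have hx'X₀ : x' ∈ X₀ := (Finset.mem_sdiff.1 hx'mem).1
    have hx'Q : x' ∉ Q := (Finset.mem_sdiff.1 hx'mem).2
    refine ⟨insert x' Q, Finset.insert_subset hx'X₀ hQX₀, ?_, ?_⟩
    · rw [Finset.card_insert_of_notMem hx'Q, hQcard]
    -- bad set grows by at most g x'
    have hsub : (Y₀.filter fun y => ¬ (∀ a ∈ insert x' Q, ∀ b ∈ insert x' Q,
        χ ({a, y} : Finset ℕ) = χ ({b, y} : Finset ℕ) → a = b)) ⊆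
        (Y₀.filter fun y => ¬ (∀ a ∈ Q, ∀ b ∈ Q,
          χ ({a, y} : Finset ℕ) = χ ({b, y} : Finset ℕ) → a = b)) ∪
        Q.biUnion (fun x => Y₀.filter fun y =>
          χ ({x', y} : Finset ℕ) = χ ({x, y} : Finset ℕ)) := by
      intro y hy
      rw [Finset.mem_filter] at hy
      obtain ⟨hyY, hbad⟩ := hy
      push_neg at hbad
      obtain ⟨a, ha, b, hb, heq, hne⟩ := hbad
      rw [Finset.mem_insert] at ha hb
      rcases ha with rfl | haQ
      · rcases hb with rfl | hbQ
        · exact absurd rfl hne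
        · apply Finset.mem_union_right
          exact Finset.mem_biUnion.2 ⟨b, hbQ, Finset.mem_filter.2 ⟨hyY, heq⟩⟩
      · rcases hb with rfl | hbQ
        · apply Finset.mem_union_right
          exact Finset.mem_biUnion.2 ⟨a, haQ, Finset.mem_filter.2 ⟨hyY, heq.symm⟩⟩
        · apply Finset.mem_union_left
          rw [Finset.mem_filter]
          refine ⟨hyY, ?_⟩
          push_neg
          exact ⟨a, haQ, b, hbQ, heq, hne⟩
    have hcard : (Y₀.filter fun y => ¬ (∀ a ∈ insert x' Q, ∀ b ∈ insert x' Q,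
        χ ({a, y} : Finset ℕ) = χ ({b, y} : Finset ℕ) → a = b)).card ≤
        (Y₀.filter fun y => ¬ (∀ a ∈ Q, ∀ b ∈ Q,
          χ ({a, y} : Finset ℕ) = χ ({b, y} : Finset ℕ) → a = b)).card + g x' := by
      calc _ ≤ _ := Finset.card_le_card hsub
      _ ≤ _ + (Q.biUnion (fun x => Y₀.filter fun y =>
          χ ({x', y} : Finset ℕ) = χ ({x, y} : Finset ℕ))).card := Finset.card_union_le _ _
      _ ≤ _ + g x' := by
          gcongr
          exact Finset.card_biUnion_le
    calc (X₀.card - k) * (Y₀.filter fun y => ¬ (∀ a ∈ insert x' Q, ∀ b ∈ insert x' Q,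
          χ ({a, y} : Finset ℕ) = χ ({b, y} : Finset ℕ) → a = b)).card
        ≤ (X₀.card - k) * ((Y₀.filter fun y => ¬ (∀ a ∈ Q, ∀ b ∈ Q,
          χ ({a, y} : Finset ℕ) = χ ({b, y} : Finset ℕ) → a = b)).card + g x') :=
          Nat.mul_le_mul_left _ hcard
    _ = (X₀.card - k) * (Y₀.filter fun y => ¬ (∀ a ∈ Q, ∀ b ∈ Q,
          χ ({a, y} : Finset ℕ) = χ ({b, y} : Finset ℕ) → a = b)).card
          + (X₀.card - k) * g x' := by ring
    _ ≤ i * i * Y₀.card * d₁ + (X₀.card - i) * g x' := by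
          gcongr
          omega
    _ ≤ i * i * Y₀.card * d₁ + i * (Y₀.card * d₁) := by gcongr
    _ ≤ (i+1) * (i+1) * Y₀.card * d₁ := by ring_nf; nlinarith

open scoped Classical in
/-- Stage 2 greedy: extend a rainbow grid column by column. -/
lemma stage2 (χ : Finset ℕ → γ) (Y₀ Q Good : Finset ℕ) (hGY : Good ⊆ Y₀)
    (d₂ : ℕ) (hQne : Q.Nonempty)
    (hrow : ∀ x ∈ Q, ∀ y ∈ Y₀,
      (Y₀.filter fun y' => χ ({x, y'} : Finset ℕ) = χ ({x, y} : Finset ℕ)).card ≤ d₂)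
    (hgood : ∀ y ∈ Good, ∀ a ∈ Q, ∀ b ∈ Q,
      χ ({a, y} : Finset ℕ) = χ ({b, y} : Finset ℕ) → a = b)
    (k : ℕ) (hbig : Q.card * Q.card * k * d₂ < Good.card) :
    ∀ j, j ≤ k → ∃ R ⊆ Good, R.card = j ∧
      ∀ x ∈ Q, ∀ x' ∈ Q, ∀ y ∈ R, ∀ y' ∈ R,
        χ ({x, y} : Finset ℕ) = χ ({x', y'} : Finset ℕ) → x = x' ∧ y = y' := by
  intro j
  -- row bound for arbitrary colors
  have hrow' : ∀ x ∈ Q, ∀ c : γ,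
      (Y₀.filter fun y => χ ({x, y} : Finset ℕ) = c).card ≤ d₂ := by
    intro x hx c
    by_cases hne : (Y₀.filter fun y => χ ({x, y} : Finset ℕ) = c).Nonempty
    · obtain ⟨y₁, hy₁⟩ := hne
      rw [Finset.mem_filter] at hy₁
      have : (Y₀.filter fun y => χ ({x, y} : Finset ℕ) = c) =
          (Y₀.filter fun y' => χ ({x, y'} : Finset ℕ) = χ ({x, y₁} : Finset ℕ)) := by
        apply Finset.filter_congr
        intro y _
        rw [hy₁.2]
      rw [this]
      exact hrow x hx y₁ hy₁.1
    · rw [Finset.not_nonempty_iff_eq_empty] at hne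
      rw [hne]; simp
  induction j with
  | zero =>
    intro _
    exact ⟨∅, Finset.empty_subset _, rfl, by simp⟩
  | succ j ih =>
    intro hjk
    obtain ⟨R, hRG, hRcard, hrb⟩ := ih (by omega)
    set forb : Finset ℕ := Q.biUnion (fun x => Q.biUnion (fun x' => R.biUnion (fun y' =>
      Y₀.filter fun y => χ ({x, y} : Finset ℕ) = χ ({x', y'} : Finset ℕ)))) with hforb
    have hforbcard : forb.card ≤ Q.card * Q.card * j * d₂ := by
      rw [hforb]
      calc (Q.biUnion _).card ≤ ∑ x ∈ Q, (Q.biUnion (fun x' => R.biUnion (fun y' =>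
            Y₀.filter fun y => χ ({x, y} : Finset ℕ) = χ ({x', y'} : Finset ℕ)))).card :=
            Finset.card_biUnion_le
      _ ≤ ∑ x ∈ Q, ∑ x' ∈ Q, (R.biUnion (fun y' =>
            Y₀.filter fun y => χ ({x, y} : Finset ℕ) = χ ({x', y'} : Finset ℕ))).card :=
            Finset.sum_le_sum (fun x _ => Finset.card_biUnion_le)
      _ ≤ ∑ x ∈ Q, ∑ x' ∈ Q, ∑ y' ∈ R,
            (Y₀.filter fun y => χ ({x, y} : Finset ℕ) = χ ({x', y'} : Finset ℕ)).card :=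
            Finset.sum_le_sum (fun x _ => Finset.sum_le_sum (fun x' _ =>
              Finset.card_biUnion_le))
      _ ≤ ∑ x ∈ Q, ∑ x' ∈ Q, ∑ y' ∈ R, d₂ :=
            Finset.sum_le_sum (fun x hx => Finset.sum_le_sum (fun x' _ =>
              Finset.sum_le_sum (fun y' _ => hrow' x hx _)))
      _ = Q.card * Q.card * j * d₂ := by
            simp [Finset.sum_const, smul_eq_mul, hRcard]; ring
    have hex : ∃ y₀ ∈ Good, y₀ ∉ forb := by
      by_contra hcon
      push_neg at hcon
      have : Good ⊆ forb := hcon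
      have := Finset.card_le_card this
      have hj : Q.card * Q.card * j * d₂ ≤ Q.card * Q.card * k * d₂ := by
        have : j ≤ k := by omega
        gcongr
      omega
    obtain ⟨y₀, hy₀G, hy₀f⟩ := hex
    have hy₀Y : y₀ ∈ Y₀ := hGY hy₀G
    have hnotf : ∀ x ∈ Q, ∀ x' ∈ Q, ∀ y' ∈ R,
        χ ({x, y₀} : Finset ℕ) ≠ χ ({x', y'} : Finset ℕ) := by
      intro x hx x' hx' y' hy' heq
      apply hy₀f
      rw [hforb]
      refine Finset.mem_biUnion.2 ⟨x, hx, Finset.mem_biUnion.2 ⟨x', hx',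
        Finset.mem_biUnion.2 ⟨y', hy', Finset.mem_filter.2 ⟨hy₀Y, heq⟩⟩⟩⟩
    have hy₀R : y₀ ∉ R := by
      intro hy₀R
      obtain ⟨x, hx⟩ := hQne
      exact hnotf x hx x hx y₀ hy₀R rfl
    refine ⟨insert y₀ R, Finset.insert_subset hy₀G hRG, ?_, ?_⟩
    · rw [Finset.card_insert_of_notMem hy₀R, hRcard]
    intro x hx x' hx' y hy y' hy' heq
    rw [Finset.mem_insert] at hy hy'
    rcases hy with hyy | hyR
    · subst hyy
      rcases hy' with hyy' | hy'R
      · subst hyy'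
        exact ⟨hgood _ hy₀G x hx x' hx' heq, rfl⟩
      · exact absurd heq (hnotf x hx x' hx' y' hy'R)
    · rcases hy' with hyy' | hy'R
      · subst hyy'
        exact absurd heq.symm (hnotf x' hx' x hx y hyR)
      · exact hrb x hx x' hx' y hyR y' hy'R heq

lemma ev_mul_rpow_le (C : ℝ) {a b : ℝ} (hab : a < b) :
    ∀ᶠ x : ℝ in atTop, C * x ^ a ≤ x ^ b := by
  have h1 : Tendsto (fun x : ℝ => x ^ (b - a)) atTop atTop :=
    tendsto_rpow_atTop (by linarith)
  filter_upwards [h1.eventually_ge_atTop C, eventually_gt_atTop (0:ℝ)] with x hx hx0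
  calc C * x ^ a ≤ x ^ (b - a) * x ^ a :=
        mul_le_mul_of_nonneg_right hx (Real.rpow_nonneg hx0.le a)
  _ = x ^ b := by rw [← Real.rpow_add hx0]; ring_nf

lemma ev_mul_rpow_lt (C : ℝ) {a b : ℝ} (hab : a < b) :
    ∀ᶠ x : ℝ in atTop, C * x ^ a < x ^ b := by
  have h1 : Tendsto (fun x : ℝ => x ^ (b - a)) atTop atTop :=
    tendsto_rpow_atTop (by linarith)
  filter_upwards [h1.eventually_gt_atTop C, eventually_gt_atTop (0:ℝ)] with x hx hx0
  calc C * x ^ a < x ^ (b - a) * x ^ a :=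
        mul_lt_mul_of_pos_right hx (Real.rpow_pos_of_pos hx0 a)
  _ = x ^ b := by rw [← Real.rpow_add hx0]; ring_nf

lemma ev_logb_le {c : ℝ} (hc : 0 < c) :
    ∀ᶠ x : ℝ in atTop, Real.logb 2 x ≤ x ^ c := by
  have h := (isLittleO_log_rpow_atTop hc).bound (c := Real.log 2) (by positivity)
  filter_upwards [h, eventually_ge_atTop (1:ℝ)] with x hx hx1
  have hx0 : (0:ℝ) < x := by linarith only [hx1]
  rw [Real.norm_eq_abs, Real.norm_eq_abs, abs_of_nonneg (Real.log_nonneg hx1),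
    abs_of_nonneg (Real.rpow_nonneg hx0.le c)] at hx
  rw [Real.logb, div_le_iff₀ (Real.log_pos one_lt_two)]
  linarith [hx]

lemma ev_rpow_ge (C : ℝ) {a : ℝ} (ha : 0 < a) :
    ∀ᶠ x : ℝ in atTop, C ≤ x ^ a :=
  (tendsto_rpow_atTop ha).eventually_ge_atTop C


lemma choose_lt_of_pow_lt {a b n D m : ℕ} (h : a * n ^ m < b * (D + 1 - m) ^ m) :
    a * n.choose m < b * D.choose m := by
  have h1 : a * n.descFactorial m ≤ a * n ^ m :=
    Nat.mul_le_mul_left a (Nat.descFactorial_le_pow n m)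
  have h2 : b * (D + 1 - m) ^ m ≤ b * D.descFactorial m :=
    Nat.mul_le_mul_left b (Nat.pow_sub_le_descFactorial D m)
  have h3 : a * n.descFactorial m < b * D.descFactorial m :=
    lt_of_le_of_lt h1 (lt_of_lt_of_le h h2)
  rw [Nat.descFactorial_eq_factorial_mul_choose, Nat.descFactorial_eq_factorial_mul_choose] at h3
  have h4 : m.factorial * (a * n.choose m) < m.factorial * (b * D.choose m) := by
    calc m.factorial * (a * n.choose m) = a * (m.factorial * n.choose m) := by ring
    _ < b * (m.factorial * D.choose m) := h3
    _ = m.factorial * (b * D.choose m) := by ring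
  exact Nat.lt_of_mul_lt_mul_left h4

end BCR



set_option maxHeartbeats 2000000 in
open scoped Classical in
/-- Asymmetric bipartite canonical Ramsey theorem: for every `l ≥ 2` there are
`ε > 0` (one may take `ε = 1/(18l)`) and `s₀ > 0` such that every edge-coloring of
`K_{s,t}` on parts `X`, `Y` with `s > s₀` and `s/log₂ s < t ≤ s` contains a rainbow
`K_{4l,4l}`, or a `Q`-canonical `K_{q,2l}`, or a monochromatic `K_{q,2l}`, where
`q = ⌈s^ε⌉₊` (and the `K_{q,2l}` may lie either way across the bipartition). -/
theorem bipartite_canonical_ramsey (l : ℕ) (hl : 2 ≤ l) :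
    ∃ ε : ℝ, 0 < ε ∧ ∃ s₀ : ℝ, 0 < s₀ ∧
      ∀ (γ : Type) (s t : ℕ) (X Y : Finset ℕ) (χ : Finset ℕ → γ),
        X.card = s → Y.card = t → Disjoint X Y →
        s₀ < (s : ℝ) → (s : ℝ) / Real.logb 2 s < (t : ℝ) → t ≤ s →
        -- (i) a rainbow colored `K_{4l,4l}`
        ((∃ X' ⊆ X, ∃ Y' ⊆ Y, X'.card = 4 * l ∧ Y'.card = 4 * l ∧
            ∀ x ∈ X', ∀ x' ∈ X', ∀ y ∈ Y', ∀ y' ∈ Y',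
              χ ({x, y} : Finset ℕ) = χ ({x', y'} : Finset ℕ) → x = x' ∧ y = y') ∨
        -- (ii) a `Q`-canonical `K_{q,2l}`
        (∃ Q R : Finset ℕ, ((Q ⊆ X ∧ R ⊆ Y) ∨ (Q ⊆ Y ∧ R ⊆ X)) ∧
            Q.card = ⌈(s : ℝ) ^ ε⌉₊ ∧ R.card = 2 * l ∧
            (∀ x ∈ Q, ∀ y ∈ R, ∀ y' ∈ R,
              χ ({x, y} : Finset ℕ) = χ ({x, y'} : Finset ℕ)) ∧
            (∀ x ∈ Q, ∀ x' ∈ Q, ∀ y ∈ R, ∀ y' ∈ R, x ≠ x' →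
              χ ({x, y} : Finset ℕ) ≠ χ ({x', y'} : Finset ℕ))) ∨
        -- (iii) a monochromatic `K_{q,2l}`
        (∃ Q R : Finset ℕ, ((Q ⊆ X ∧ R ⊆ Y) ∨ (Q ⊆ Y ∧ R ⊆ X)) ∧
            Q.card = ⌈(s : ℝ) ^ ε⌉₊ ∧ R.card = 2 * l ∧
            (∀ x ∈ Q, ∀ x' ∈ Q, ∀ y ∈ R, ∀ y' ∈ R,
              χ ({x, y} : Finset ℕ) = χ ({x', y'} : Finset ℕ)))) := by
  have hlR : (2:ℝ) ≤ (l:ℝ) := by exact_mod_cast hl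
  have hl0 : (0:ℝ) < (l:ℝ) := by linarith only [hlR]
  set ε : ℝ := 1 / (18 * l) with hεdef
  have hε : 0 < ε := by positivity
  set δ : ℝ := 1 / (8 * l) with hδdef
  have hδ : 0 < δ := by positivity
  have hδ16 : δ ≤ 1/16 := by
    rw [hδdef, div_le_div_iff₀ (by positivity) (by norm_num)]
    linarith only [hlR]
  have hε36 : ε ≤ 1/36 := by
    rw [hεdef, div_le_div_iff₀ (by positivity) (by norm_num)]
    linarith only [hlR]
  set m : ℕ := 2 * l with hmdef
  set k : ℕ := 4 * l with hkdef
  have hm0 : 0 < m := by omega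
  have hk0 : 0 < k := by omega
  have hmR : (m:ℝ) = 2 * (l:ℝ) := by rw [hmdef]; push_cast; ring
  have hexp1 : 2*ε + δ*(m:ℝ) + δ/2 < 1 := by
    rw [hεdef, hδdef, hmR]
    have hl' : (l:ℝ) ≠ 0 := by positivity
    have e1 : (2:ℝ) * (1/(18*l)) = (1/9) * (1/l) := by field_simp; ring
    have e2 : (1:ℝ)/(8*l) * (2*l) = 1/4 := by field_simp; ring
    have e3 : (1:ℝ)/(8*l)/2 = (1/16) * (1/l) := by field_simp; ring
    rw [e1, e2, e3]
    have hinv : (1:ℝ)/l ≤ 1/2 := by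
      rw [div_le_div_iff₀ hl0 (by norm_num)]; linarith only [hlR]
    linarith only [hinv]
  have hev : ∀ᶠ x : ℝ in atTop,
      (4 ≤ x) ∧ (Real.logb 2 x ≤ x ^ (δ/2)) ∧ (2*(m:ℝ) ≤ x ^ ((2:ℝ)⁻¹)) ∧
      ((2:ℝ)^(m+1) * x ^ (2*ε + δ*(m:ℝ) + δ/2) < x ^ (1:ℝ)) ∧ (1 ≤ x ^ (1-δ)) ∧
      ((2*(8*(k:ℝ)^2*2 + (k:ℝ) + 1)) * x ^ (1-δ) ≤ x ^ (1:ℝ)) ∧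
      ((16/7*(2*(k:ℝ)^3)) * x ^ (1-δ) < x ^ (1-δ/2)) := by
    have e1 := eventually_ge_atTop (4:ℝ)
    have e2 := BCR.ev_logb_le (show (0:ℝ) < δ/2 by positivity)
    have e3 := BCR.ev_rpow_ge (2*(m:ℝ)) (show (0:ℝ) < (2:ℝ)⁻¹ by norm_num)
    have e4 := BCR.ev_mul_rpow_lt ((2:ℝ)^(m+1)) hexp1
    have e5 := BCR.ev_rpow_ge (1:ℝ) (show (0:ℝ) < 1 - δ by linarith)
    have e6 := BCR.ev_mul_rpow_le (2*(8*(k:ℝ)^2*2 + (k:ℝ) + 1))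
      (show 1 - δ < 1 by linarith)
    have e7 := BCR.ev_mul_rpow_lt (16/7*(2*(k:ℝ)^3))
      (show 1 - δ < 1 - δ/2 by linarith)
    filter_upwards [e1, e2, e3, e4, e5, e6, e7] with z a1 a2 a3 a4 a5 a6 a7
    exact ⟨a1, a2, a3, a4, a5, a6, a7⟩
  obtain ⟨x₀, hx₀⟩ := eventually_atTop.mp hev
  refine ⟨ε, hε, max x₀ 1, by positivity, ?_⟩
  intro γ s t X Y χ hXcard hYcard hdisj hs ht1 ht2
  set x : ℝ := (s:ℝ) with hxdef
  obtain ⟨hx4, hlogb, h2m, hΦ4, hone, hΦ5, hΦ6⟩ :=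
    hx₀ x (le_of_lt (lt_of_le_of_lt (le_max_left _ _) hs))
  have hx0 : (0:ℝ) < x := by linarith only [hx4]
  have hx1 : (1:ℝ) ≤ x := by linarith only [hx4]
  rw [Real.rpow_one] at hΦ4 hΦ5
  set L : ℝ := Real.logb 2 x with hLdef
  have hL0 : 0 < L := Real.logb_pos (by norm_num) (by linarith)
  set q : ℕ := ⌈x ^ ε⌉₊ with hqdef
  set d₁ : ℕ := ⌈x ^ (1-δ)⌉₊ with hd₁def
  set d₂ : ℕ := ⌈(t:ℝ) ^ (1-δ)⌉₊ with hd₂def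
  have htR0 : (0:ℝ) < (t:ℝ) := lt_trans (by positivity) ht1
  have htRx : (t:ℝ) ≤ x := by rw [hxdef]; exact_mod_cast ht2
  have hδ' : (0:ℝ) ≤ 1 - δ := by linarith only [hδ16]
  have hq1 : 0 < q := Nat.ceil_pos.2 (by positivity)
  have hqle : ((q - 1 : ℕ):ℝ) ≤ x ^ ε := by
    have h := Nat.ceil_lt_add_one (show (0:ℝ) ≤ x ^ ε by positivity)
    have hc : ((q - 1 : ℕ):ℝ) = (q:ℝ) - 1 := by
      rw [Nat.cast_sub hq1]; norm_num
    rw [hc]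
    rw [hqdef]
    linarith
  have hd₁l : x ^ (1-δ) ≤ (d₁:ℝ) := Nat.le_ceil _
  have hd₁u : (d₁:ℝ) ≤ x ^ (1-δ) + 1 :=
    le_of_lt (Nat.ceil_lt_add_one (by positivity))
  have hhalf : x ^ ((2:ℝ)⁻¹) ≤ x ^ (1-δ) :=
    Real.rpow_le_rpow_of_exponent_le hx1 (by norm_num; linarith)
  have h2mx : 2*(m:ℝ) ≤ x ^ (1-δ) := le_trans h2m hhalf
  have hmd₁ : m ≤ d₁ := by
    have hmm : (m:ℝ) ≤ (d₁:ℝ) := by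
      have : (0:ℝ) ≤ (m:ℝ) := by positivity
      linarith
    exact_mod_cast hmm
  have hxL : x ^ (1 - δ/2) ≤ x / L := by
    rw [le_div_iff₀ hL0]
    calc x ^ (1-δ/2) * L ≤ x ^ (1-δ/2) * x ^ (δ/2) := by
          exact mul_le_mul_of_nonneg_left hlogb (by positivity)
    _ = x ^ ((1-δ/2) + δ/2) := (Real.rpow_add hx0 _ _).symm
    _ = x := by rw [show (1-δ/2) + δ/2 = (1:ℝ) by ring, Real.rpow_one]
  have htlow : x ^ (1-δ/2) ≤ (t:ℝ) := le_trans hxL (le_of_lt ht1)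
  have htd : x ^ ((2:ℝ)⁻¹) ≤ (t:ℝ) ^ (1-δ) := by
    calc x ^ ((2:ℝ)⁻¹) ≤ x ^ ((1-δ/2)*(1-δ)) := by
          apply Real.rpow_le_rpow_of_exponent_le hx1
          have e : (1-δ/2)*(1-δ) = 1 - (3/2)*δ + δ^2/2 := by ring
          rw [e]
          linarith only [hδ16, sq_nonneg δ]
    _ = (x ^ (1-δ/2)) ^ (1-δ) := Real.rpow_mul hx0.le _ _
    _ ≤ (t:ℝ) ^ (1-δ) := Real.rpow_le_rpow (by positivity) htlow hδ'
  have h2mt : 2*(m:ℝ) ≤ (t:ℝ) ^ (1-δ) := le_trans h2m htd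
  have hd₂l : (t:ℝ) ^ (1-δ) ≤ (d₂:ℝ) := Nat.le_ceil _
  have htpow : (t:ℝ)^(1-δ) ≤ x^(1-δ) := Real.rpow_le_rpow (by positivity) htRx hδ'
  have hd₂u : (d₂:ℝ) ≤ x ^ (1-δ) + 1 := by
    have h := Nat.ceil_lt_add_one (show (0:ℝ) ≤ (t:ℝ)^(1-δ) by positivity)
    rw [hd₂def]
    linarith
  have hmd₂ : m ≤ d₂ := by
    have hmm : (m:ℝ) ≤ (d₂:ℝ) := by
      have : (0:ℝ) ≤ (m:ℝ) := by positivity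
      linarith
    exact_mod_cast hmm
  have hq2 : ((q-1:ℕ):ℝ) * ((q-1:ℕ):ℝ) ≤ x ^ (2*ε) := by
    calc ((q-1:ℕ):ℝ) * ((q-1:ℕ):ℝ) ≤ x ^ ε * x ^ ε :=
          mul_le_mul hqle hqle (by positivity) (by positivity)
    _ = x ^ (ε + ε) := (Real.rpow_add hx0 _ _).symm
    _ = x ^ (2*ε) := by ring_nf
  -- Y-side heavy/light dichotomy
  set P1 : ℕ → Prop := fun y => ∃ xx ∈ X, d₁ ≤
    (X.filter fun x' => χ ({x', y} : Finset ℕ) = χ ({xx, y} : Finset ℕ)).card with hP1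
  have hsplitY := Finset.card_filter_add_card_filter_not (s := Y) (p := P1)
  rcases (show t ≤ 2 * (Y.filter P1).card ∨ t ≤ 2 * (Y.filter (fun y => ¬ P1 y)).card by
    omega) with hYheavy | hYlight
  · -- CASE 1 : many heavy rows on the Y side
    have hheavy : ∀ a ∈ Y.filter P1, ∃ S, S ⊆ X ∧ S.card = d₁ ∧
        ∀ b ∈ S, ∀ b' ∈ S, χ ({a, b} : Finset ℕ) = χ ({a, b'} : Finset ℕ) := by
      intro y hy
      rw [Finset.mem_filter] at hy
      obtain ⟨hyY, xx, hxx, hcard⟩ := hy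
      obtain ⟨S, hSsub, hScard⟩ := Finset.exists_subset_card_eq hcard
      refine ⟨S, hSsub.trans (Finset.filter_subset _ _), hScard, ?_⟩
      intro b hb b' hb'
      have h1 := (Finset.mem_filter.1 (hSsub hb)).2
      have h2 := (Finset.mem_filter.1 (hSsub hb')).2
      rw [Finset.pair_comm y b, Finset.pair_comm y b', h1, h2]
    -- the counting condition
    have hmain : x ^ (2*ε) * x ^ ((m:ℝ)) < (x / (2*L)) * ((x ^ (1-δ) / 2) ^ m) := by
      have hstep : (2:ℝ)^(m+1) * (L * x ^ (2*ε + (m:ℝ))) < x ^ (1 + (1-δ)*(m:ℝ)) := by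
        have e1 : x ^ (2*ε + (m:ℝ) + δ/2) =
            x ^ (2*ε + δ*(m:ℝ) + δ/2) * x ^ ((1-δ)*(m:ℝ)) := by
          rw [← Real.rpow_add hx0]; congr 1; ring
        have e2 : x ^ (1 + (1-δ)*(m:ℝ)) = x * x ^ ((1-δ)*(m:ℝ)) := by
          rw [Real.rpow_add hx0, Real.rpow_one]
        have h3 : L * x ^ (2*ε + (m:ℝ)) ≤ x ^ (2*ε + (m:ℝ) + δ/2) := by
          calc L * x ^ (2*ε + (m:ℝ)) ≤ x ^ (δ/2) * x ^ (2*ε + (m:ℝ)) :=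
                mul_le_mul_of_nonneg_right hlogb (by positivity)
          _ = x ^ (δ/2 + (2*ε + (m:ℝ))) := (Real.rpow_add hx0 _ _).symm
          _ = x ^ (2*ε + (m:ℝ) + δ/2) := by ring_nf
        calc (2:ℝ)^(m+1) * (L * x ^ (2*ε + (m:ℝ)))
            ≤ (2:ℝ)^(m+1) * x ^ (2*ε + (m:ℝ) + δ/2) := by
              exact mul_le_mul_of_nonneg_left h3 (by positivity)
        _ = ((2:ℝ)^(m+1) * x ^ (2*ε + δ*(m:ℝ) + δ/2)) * x ^ ((1-δ)*(m:ℝ)) := by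
              rw [e1]; ring
        _ < x * x ^ ((1-δ)*(m:ℝ)) :=
              mul_lt_mul_of_pos_right hΦ4 (by positivity)
        _ = x ^ (1 + (1-δ)*(m:ℝ)) := e2.symm
      have hpow : ((x ^ (1-δ) / 2) ^ m : ℝ) = x ^ ((1-δ)*(m:ℝ)) / 2^m := by
        rw [div_pow]
        congr 1
        rw [← Real.rpow_natCast (x ^ (1-δ)) m, ← Real.rpow_mul hx0.le]
      rw [hpow, div_mul_div_comm, lt_div_iff₀ (by positivity)]
      calc x ^ (2*ε) * x ^ ((m:ℝ)) * (2*L*2^m)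
          = (2:ℝ)^(m+1) * (L * x ^ (2*ε + (m:ℝ))) := by
            rw [← Real.rpow_add hx0]; ring
      _ < x ^ (1 + (1-δ)*(m:ℝ)) := hstep
      _ = x * x ^ ((1-δ)*(m:ℝ)) := by rw [Real.rpow_add hx0, Real.rpow_one]
    have hHcard : (t:ℝ)/2 ≤ ((Y.filter P1).card:ℝ) := by
      have : (t:ℝ) ≤ 2 * ((Y.filter P1).card:ℝ) := by exact_mod_cast hYheavy
      linarith
    have hxLt : x/(2*L) < (t:ℝ)/2 := by
      have e : x/(2*L) = (x/L)/2 := by ring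
      rw [e]
      linarith
    have hd₁m : x^(1-δ)/2 ≤ ((d₁ + 1 - m : ℕ):ℝ) := by
      have hcast : ((d₁ + 1 - m : ℕ):ℝ) = (d₁:ℝ) + 1 - (m:ℝ) := by
        have hmd : m ≤ d₁ + 1 := by omega
        push_cast [hmd]
        ring
      rw [hcast]
      linarith
    have hfin : ((q-1:ℕ):ℝ) * ((q-1:ℕ):ℝ) * ((s:ℕ):ℝ)^m <
        (((Y.filter P1).card):ℝ) * (((d₁+1-m:ℕ)):ℝ)^m := by
      have hxm : ((s:ℕ):ℝ)^m = x ^ ((m:ℝ)) := by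
        rw [Real.rpow_natCast]
      calc ((q-1:ℕ):ℝ) * ((q-1:ℕ):ℝ) * ((s:ℕ):ℝ)^m ≤ x ^ (2*ε) * x ^ ((m:ℝ)) := by
            rw [hxm]
            exact mul_le_mul_of_nonneg_right hq2 (by positivity)
      _ < (x/(2*L)) * ((x ^ (1-δ)/2) ^ m) := hmain
      _ ≤ (((Y.filter P1).card):ℝ) * (((d₁+1-m:ℕ)):ℝ)^m := by
            apply mul_le_mul (le_trans (le_of_lt hxLt) hHcard)
              (pow_le_pow_left₀ (by positivity) hd₁m m) (by positivity) (by positivity)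
    have hfinN : (q-1)*(q-1)*(s^m) < (Y.filter P1).card * ((d₁+1-m)^m) := by
      exact_mod_cast hfin
    have hcount : (q-1)*(q-1)*(X.card.choose m) < (Y.filter P1).card * (d₁.choose m) := by
      rw [hXcard]
      exact BCR.choose_lt_of_pow_lt hfinN
    obtain ⟨Q, R, hQA, hRB, hQc, hRc, hcase⟩ :=
      BCR.heavy_side χ Y X (Y.filter P1) (Finset.filter_subset _ _) d₁ m q hm0 hheavy hcount
    rcases hcase with ⟨hconst, hdist⟩ | hmono
    · exact Or.inr (Or.inl ⟨Q, R, Or.inr ⟨hQA, hRB⟩, hQc, hRc, hconst, hdist⟩)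
    · exact Or.inr (Or.inr ⟨Q, R, Or.inr ⟨hQA, hRB⟩, hQc, hRc, hmono⟩)
  · -- Y is mostly light
    set Y₀ : Finset ℕ := Y.filter (fun y => ¬ P1 y) with hY₀def
    have hY₀Y : Y₀ ⊆ Y := Finset.filter_subset _ _
    have hY₀card : (t:ℝ)/2 ≤ ((Y₀.card):ℝ) := by
      have : (t:ℝ) ≤ 2 * ((Y₀.card):ℝ) := by exact_mod_cast hYlight
      linarith
    have htY₀ : ((Y₀.card):ℝ) ≤ (t:ℝ) := by
      exact_mod_cast (by rw [← hYcard]; exact Finset.card_le_card hY₀Y : Y₀.card ≤ t)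
    -- X-side heavy/light dichotomy w.r.t. Y₀
    set P2 : ℕ → Prop := fun xx => ∃ yy ∈ Y₀, d₂ ≤
      (Y₀.filter fun y' => χ ({xx, y'} : Finset ℕ) = χ ({xx, yy} : Finset ℕ)).card with hP2
    have hsplitX := Finset.card_filter_add_card_filter_not (s := X) (p := P2)
    rcases (show s ≤ 2 * (X.filter P2).card ∨ s ≤ 2 * (X.filter (fun xx => ¬ P2 xx)).card by
      omega) with hXheavy | hXlight
    · -- CASE 2 : many heavy rows on the X side
      have hheavy : ∀ a ∈ X.filter P2, ∃ S, S ⊆ Y₀ ∧ S.card = d₂ ∧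
          ∀ b ∈ S, ∀ b' ∈ S, χ ({a, b} : Finset ℕ) = χ ({a, b'} : Finset ℕ) := by
        intro xx hx
        rw [Finset.mem_filter] at hx
        obtain ⟨hxX, yy, hyy, hcard⟩ := hx
        obtain ⟨S, hSsub, hScard⟩ := Finset.exists_subset_card_eq hcard
        refine ⟨S, hSsub.trans (Finset.filter_subset _ _), hScard, ?_⟩
        intro b hb b' hb'
        have h1 := (Finset.mem_filter.1 (hSsub hb)).2
        have h2 := (Finset.mem_filter.1 (hSsub hb')).2
        rw [h1, h2]
      have hone' : (1:ℝ) ≤ x ^ (δ/2) := by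
        have := Real.rpow_le_rpow_of_exponent_le hx1 (show (0:ℝ) ≤ δ/2 by positivity)
        rwa [Real.rpow_zero] at this
      have hmain : x ^ (2*ε) * (t:ℝ) ^ ((m:ℝ)) < (x/2) * (((t:ℝ) ^ (1-δ) / 2) ^ m) := by
        have hstep : (2:ℝ)^(m+1) * (x ^ (2*ε) * (t:ℝ) ^ ((m:ℝ)))
            < x * (t:ℝ) ^ ((1-δ)*(m:ℝ)) := by
          have e1 : (t:ℝ) ^ ((m:ℝ)) = (t:ℝ) ^ (δ*(m:ℝ)) * (t:ℝ) ^ ((1-δ)*(m:ℝ)) := by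
            rw [← Real.rpow_add htR0]; congr 1; ring
          have h2 : (t:ℝ) ^ (δ*(m:ℝ)) ≤ x ^ (δ*(m:ℝ)) :=
            Real.rpow_le_rpow (by positivity) htRx (by positivity)
          have h3 : x ^ (2*ε) * x ^ (δ*(m:ℝ)) ≤ x ^ (2*ε + δ*(m:ℝ) + δ/2) := by
            calc x ^ (2*ε) * x ^ (δ*(m:ℝ)) = x ^ (2*ε + δ*(m:ℝ)) :=
                  (Real.rpow_add hx0 _ _).symm
            _ ≤ x ^ (2*ε + δ*(m:ℝ) + δ/2) :=
                  Real.rpow_le_rpow_of_exponent_le hx1 (by linarith)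
          calc (2:ℝ)^(m+1) * (x ^ (2*ε) * (t:ℝ) ^ ((m:ℝ)))
              = ((2:ℝ)^(m+1) * (x ^ (2*ε) * (t:ℝ) ^ (δ*(m:ℝ)))) * (t:ℝ) ^ ((1-δ)*(m:ℝ)) := by
                rw [e1]; ring
          _ ≤ ((2:ℝ)^(m+1) * (x ^ (2*ε) * x ^ (δ*(m:ℝ)))) * (t:ℝ) ^ ((1-δ)*(m:ℝ)) := by
                have : (0:ℝ) ≤ (t:ℝ) ^ ((1-δ)*(m:ℝ)) := by positivity
                apply mul_le_mul_of_nonneg_right _ this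
                apply mul_le_mul_of_nonneg_left _ (by positivity)
                exact mul_le_mul_of_nonneg_left h2 (by positivity)
          _ ≤ ((2:ℝ)^(m+1) * x ^ (2*ε + δ*(m:ℝ) + δ/2)) * (t:ℝ) ^ ((1-δ)*(m:ℝ)) := by
                apply mul_le_mul_of_nonneg_right _ (by positivity)
                exact mul_le_mul_of_nonneg_left h3 (by positivity)
          _ < x * (t:ℝ) ^ ((1-δ)*(m:ℝ)) :=
                mul_lt_mul_of_pos_right hΦ4 (by positivity)
        have hpow : (((t:ℝ) ^ (1-δ) / 2) ^ m : ℝ) = (t:ℝ) ^ ((1-δ)*(m:ℝ)) / 2^m := by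
          rw [div_pow]
          congr 1
          rw [← Real.rpow_natCast ((t:ℝ) ^ (1-δ)) m, ← Real.rpow_mul htR0.le]
        rw [hpow, div_mul_div_comm, lt_div_iff₀ (by positivity)]
        calc x ^ (2*ε) * (t:ℝ) ^ ((m:ℝ)) * (2*2^m)
            = (2:ℝ)^(m+1) * (x ^ (2*ε) * (t:ℝ) ^ ((m:ℝ))) := by ring
        _ < x * (t:ℝ) ^ ((1-δ)*(m:ℝ)) := hstep
      have hH2card : x/2 ≤ ((X.filter P2).card:ℝ) := by
        have : (s:ℕ) ≤ 2 * (X.filter P2).card := hXheavy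
        have h2 : (x:ℝ) ≤ 2 * ((X.filter P2).card:ℝ) := by
          rw [hxdef]; exact_mod_cast this
        linarith
      have hd₂m : (t:ℝ)^(1-δ)/2 ≤ ((d₂ + 1 - m : ℕ):ℝ) := by
        have hcast : ((d₂ + 1 - m : ℕ):ℝ) = (d₂:ℝ) + 1 - (m:ℝ) := by
          have hmd : m ≤ d₂ + 1 := by omega
          push_cast [hmd]
          ring
        rw [hcast]
        linarith
      have hfin : ((q-1:ℕ):ℝ) * ((q-1:ℕ):ℝ) * ((Y₀.card:ℕ):ℝ)^m <
          (((X.filter P2).card):ℝ) * (((d₂+1-m:ℕ)):ℝ)^m := by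
        have hym : ((Y₀.card:ℕ):ℝ)^m ≤ (t:ℝ) ^ ((m:ℝ)) := by
          rw [Real.rpow_natCast]
          exact pow_le_pow_left₀ (Nat.cast_nonneg _) htY₀ m
        calc ((q-1:ℕ):ℝ) * ((q-1:ℕ):ℝ) * ((Y₀.card:ℕ):ℝ)^m
            ≤ x ^ (2*ε) * (t:ℝ) ^ ((m:ℝ)) := by
              apply mul_le_mul hq2 hym (pow_nonneg (Nat.cast_nonneg _) _)
                (Real.rpow_nonneg hx0.le _)
        _ < (x/2) * (((t:ℝ) ^ (1-δ)/2) ^ m) := hmain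
        _ ≤ (((X.filter P2).card):ℝ) * (((d₂+1-m:ℕ)):ℝ)^m := by
              have hnn : (0:ℝ) ≤ (t:ℝ) ^ (1-δ)/2 :=
                div_nonneg (Real.rpow_nonneg htR0.le _) (by norm_num)
              apply mul_le_mul hH2card (pow_le_pow_left₀ hnn hd₂m m)
                (pow_nonneg hnn m) (Nat.cast_nonneg _)
      have hfinN : (q-1)*(q-1)*(Y₀.card^m) < (X.filter P2).card * ((d₂+1-m)^m) := by
        exact_mod_cast hfin
      have hcount : (q-1)*(q-1)*(Y₀.card.choose m) < (X.filter P2).card * (d₂.choose m) :=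
        BCR.choose_lt_of_pow_lt hfinN
      obtain ⟨Q, R, hQA, hRB, hQc, hRc, hcase⟩ :=
        BCR.heavy_side χ X Y₀ (X.filter P2) (Finset.filter_subset _ _) d₂ m q hm0 hheavy hcount
      rcases hcase with ⟨hconst, hdist⟩ | hmono
      · exact Or.inr (Or.inl ⟨Q, R, Or.inl ⟨hQA, hRB.trans hY₀Y⟩, hQc, hRc, hconst, hdist⟩)
      · exact Or.inr (Or.inr ⟨Q, R, Or.inl ⟨hQA, hRB.trans hY₀Y⟩, hQc, hRc, hmono⟩)
    · -- CASE 3 : both sides light, build a rainbow K_{k,k}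
      set X₀ : Finset ℕ := X.filter (fun xx => ¬ P2 xx) with hX₀def
      have hX₀X : X₀ ⊆ X := Finset.filter_subset _ _
      have hX₀card : x/2 ≤ ((X₀.card):ℝ) := by
        have h2 : (x:ℝ) ≤ 2 * ((X₀.card):ℝ) := by
          rw [hxdef]; exact_mod_cast hXlight
        linarith
      have hd₁1 : 0 < d₁ := by omega
      -- k < X₀.card
      have hk2 : (k:ℝ) + 1 ≤ x/2 := by
        have pa : (0:ℝ) ≤ ((k:ℝ)+1)*(x^(1-δ)-1) :=
          mul_nonneg (by positivity) (by linarith only [hone])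
        have pb : (0:ℝ) ≤ (k:ℝ)^2*x^(1-δ) :=
          mul_nonneg (sq_nonneg _) (by linarith only [hone])
        linarith only [hΦ5, pa, pb]
      have hkP : k < X₀.card := by
        have : ((k:ℕ):ℝ) < ((X₀.card):ℝ) := by linarith only [hk2, hX₀card]
        exact_mod_cast this
      -- lightness of Y₀ rows
      have hlight1 : ∀ y ∈ Y₀, ∀ xx ∈ X,
          (X.filter fun x' => χ ({x', y} : Finset ℕ) = χ ({xx, y} : Finset ℕ)).card ≤ d₁ := by
        intro y hy xx hxx
        rw [hY₀def, Finset.mem_filter] at hy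
        have h2 := hy.2
        simp only [hP1] at h2
        push_neg at h2
        exact le_of_lt (h2 xx hxx)
      obtain ⟨Q, hQX₀, hQcard, hQbad⟩ :=
        BCR.stage1 χ X Y₀ X₀ hX₀X d₁ k hlight1 hkP k (le_refl k)
      -- the bad set is small
      have hPk : 8*(k*k*d₁) ≤ X₀.card - k := by
        have hA1 : (0:ℝ) ≤ x^(1-δ) - 1 := by linarith
        have p1 : (k:ℝ)^2*(d₁:ℝ) ≤ (k:ℝ)^2*(x^(1-δ)+1) :=
          mul_le_mul_of_nonneg_left hd₁u (sq_nonneg _)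
        have p2 : (0:ℝ) ≤ (k:ℝ)^2*(x^(1-δ)-1) := mul_nonneg (sq_nonneg _) hA1
        have p3 : (0:ℝ) ≤ (k:ℝ)*(x^(1-δ)-1) := mul_nonneg (by positivity) hA1
        have hreal : 8*(k:ℝ)^2*(d₁:ℝ) + (k:ℝ) ≤ x/2 := by
          linarith only [hΦ5, p1, p2, p3, hone]
        have hN : ((8*(k*k*d₁):ℕ):ℝ) ≤ ((X₀.card - k:ℕ):ℝ) := by
          push_cast [Nat.cast_sub (le_of_lt hkP)]
          linarith only [hreal, hX₀card]
        exact_mod_cast hN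
      have hd₁1 : 0 < d₁ := by omega
      have hbad8 : 8 * (Y₀.filter fun y => ¬ (∀ a ∈ Q, ∀ b ∈ Q,
          χ ({a, y} : Finset ℕ) = χ ({b, y} : Finset ℕ) → a = b)).card ≤ Y₀.card := by
        set B := (Y₀.filter fun y => ¬ (∀ a ∈ Q, ∀ b ∈ Q,
          χ ({a, y} : Finset ℕ) = χ ({b, y} : Finset ℕ) → a = b)).card with hBdef
        have h1 : (8*(k*k*d₁)) * B ≤ (X₀.card - k) * B :=
          Nat.mul_le_mul_right _ hPk
        have h2 : (8*(k*k*d₁)) * B ≤ k*k*Y₀.card*d₁ := le_trans h1 hQbad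
        have h3 : (k*(k*d₁)) * (8 * B) ≤ (k*(k*d₁)) * Y₀.card := by
          calc (k*(k*d₁)) * (8 * B) = (8*(k*k*d₁)) * B := by ring
          _ ≤ k*k*Y₀.card*d₁ := h2
          _ = (k*(k*d₁)) * Y₀.card := by ring
        exact Nat.le_of_mul_le_mul_left h3 (Nat.mul_pos hk0 (Nat.mul_pos hk0 hd₁1))
      have hsplitG : (Y₀.filter fun y => (∀ a ∈ Q, ∀ b ∈ Q,
          χ ({a, y} : Finset ℕ) = χ ({b, y} : Finset ℕ) → a = b)).card +
          (Y₀.filter fun y => ¬ (∀ a ∈ Q, ∀ b ∈ Q,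
          χ ({a, y} : Finset ℕ) = χ ({b, y} : Finset ℕ) → a = b)).card = Y₀.card :=
        Finset.card_filter_add_card_filter_not _
      set Good : Finset ℕ := Y₀.filter (fun y => ∀ a ∈ Q, ∀ b ∈ Q,
        χ ({a, y} : Finset ℕ) = χ ({b, y} : Finset ℕ) → a = b) with hGooddef
      have hGY₀ : Good ⊆ Y₀ := Finset.filter_subset _ _
      have hbigN : k*k*k*d₂ < Good.card := by
        have hGc : ((Good.card):ℝ) + ((Y₀.filter fun y => ¬ (∀ a ∈ Q, ∀ b ∈ Q,
            χ ({a, y} : Finset ℕ) = χ ({b, y} : Finset ℕ) → a = b)).card : ℝ)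
            = ((Y₀.card):ℝ) := by exact_mod_cast hsplitG
        have hBadR : 8*((Y₀.filter fun y => ¬ (∀ a ∈ Q, ∀ b ∈ Q,
            χ ({a, y} : Finset ℕ) = χ ({b, y} : Finset ℕ) → a = b)).card : ℝ)
            ≤ ((Y₀.card):ℝ) := by exact_mod_cast hbad8
        have c1 : (k:ℝ)^3*(d₂:ℝ) ≤ 2*(k:ℝ)^3*x^(1-δ) := by
          have q1 : (k:ℝ)^3*(d₂:ℝ) ≤ (k:ℝ)^3*(x^(1-δ)+1) :=
            mul_le_mul_of_nonneg_left hd₂u (by positivity)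
          have q2 : (0:ℝ) ≤ (k:ℝ)^3*(x^(1-δ)-1) :=
            mul_nonneg (by positivity) (by linarith only [hone])
          linarith only [q1, q2]
        have c2 : 2*(k:ℝ)^3*x^(1-δ) < (7/16)*x^(1-δ/2) := by linarith only [hΦ6]
        have c3 : (7/16)*x^(1-δ/2) ≤ (7/16)*(x/L) := by linarith only [hxL]
        have c4 : (7/16)*(x/L) < (7/16)*(t:ℝ) := by linarith only [ht1]
        have c5 : (7/16)*(t:ℝ) ≤ (7/8)*((Y₀.card):ℝ) := by linarith only [hY₀card]
        have c6 : (7/8)*((Y₀.card):ℝ) ≤ ((Good.card):ℝ) := by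
          linarith only [hGc, hBadR]
        have : ((k*k*k*d₂ : ℕ):ℝ) < ((Good.card):ℝ) := by
          push_cast
          linarith only [c1, c2, c3, c4, c5, c6]
        exact_mod_cast this
      have hQne : Q.Nonempty := Finset.card_pos.1 (by rw [hQcard]; omega)
      have hrow : ∀ xx ∈ Q, ∀ yy ∈ Y₀,
          (Y₀.filter fun y' => χ ({xx, y'} : Finset ℕ) = χ ({xx, yy} : Finset ℕ)).card ≤ d₂ := by
        intro xx hxx yy hyy
        have hxX₀ := hQX₀ hxx
        rw [hX₀def, Finset.mem_filter] at hxX₀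
        have h2 := hxX₀.2
        simp only [hP2] at h2
        push_neg at h2
        exact le_of_lt (h2 yy hyy)
      have hgood : ∀ y ∈ Good, ∀ a ∈ Q, ∀ b ∈ Q,
          χ ({a, y} : Finset ℕ) = χ ({b, y} : Finset ℕ) → a = b := by
        intro y hy
        exact (Finset.mem_filter.1 hy).2
      obtain ⟨R, hRG, hRcard, hrb⟩ := BCR.stage2 χ Y₀ Q Good hGY₀ d₂ hQne hrow hgood k
        (by rw [hQcard]; exact hbigN) k (le_refl k)
      exact Or.inl ⟨Q, hQX₀.trans hX₀X, R, (hRG.trans hGY₀).trans hY₀Y, hQcard, hRcard, hrb⟩
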